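/- For strictly increasing sequences r = [r_0,...,r_d] and x = [x_0,...,x_d] of nonnegative integers, the matrix T(r,x) with entries C(x_j, r_i) is invertible if and only if all its diagonal entries C(x_k, r_k) are nonzero. -/

import Mathlib

private lemma det_zero_of_bad {d : ℕ} (r x : Fin (d + 1) → ℕ)
    (hr : Monotone r) (hx : Monotone x) (k : Fin (d + 1)) (hk : x k < r k) :
    (Matrix.of fun i j : Fin (d + 1) => ((x j).choose (r i) : ℚ)).det = 0 := by
  rw [Matrix.det_apply]
  refine Finset.sum_eq_zero fun σ _ => ?_
  have hex : ∃ i, i ≤ k ∧ k ≤ σ i := by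
    by_contra h
    push_neg at h
    obtain ⟨a, ha, b, hb, hab, he⟩ := Finset.exists_ne_map_eq_of_card_lt_of_maps_to
      (s := Finset.Iic k) (t := Finset.Iio k)
      (by rw [Fin.card_Iic, Fin.card_Iio]; omega)
      (fun a ha => by
        simp only [Finset.mem_coe, Finset.mem_Iic] at ha
        simpa using h a ha)
    exact hab (σ.injective he)
  obtain ⟨i, hik, hki⟩ := hex
  have hz : (Matrix.of fun i j : Fin (d + 1) => ((x j).choose (r i) : ℚ)) (σ i) i = 0 := by
    simp only [Matrix.of_apply]
    have : x i < r (σ i) := lt_of_le_of_lt (hx hik) (lt_of_lt_of_le hk (hr hki))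
    rw [Nat.choose_eq_zero_of_lt this]
    norm_num
  exact smul_eq_zero_of_right _ (Finset.prod_eq_zero (Finset.mem_univ i) hz)

private lemma key : ∀ (n : ℕ) {d : ℕ} (r x : Fin (d + 1) → ℕ),
    StrictMono r → StrictMono x → (∑ k, x k) + d ≤ n →
    0 ≤ (Matrix.of fun i j : Fin (d + 1) => ((x j).choose (r i) : ℚ)).det ∧
    ((∀ k, r k ≤ x k) → 0 < (Matrix.of fun i j : Fin (d + 1) => ((x j).choose (r i) : ℚ)).det) := by
  intro n
  induction n with
  | zero =>
    intro d r x hr hx hn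
    have hd : d = 0 := by omega
    subst hd
    have hx0 : x 0 = 0 := by
      have : ∑ k, x k = x 0 := by simp [Fin.sum_univ_succ]
      omega
    constructor
    · rw [Matrix.det_fin_one]
      simp only [Matrix.of_apply]
      positivity
    · intro hdom
      have hr0 : r 0 = 0 := by have := hdom 0; omega
      rw [Matrix.det_fin_one]
      simp [hx0, hr0]
  | succ n ih =>
    intro d r x hr hx hn
    by_cases hdom : ∀ k, r k ≤ x k
    swap
    · push_neg at hdom
      obtain ⟨k, hk⟩ := hdom
      have h0 := det_zero_of_bad r x hr.monotone hx.monotone k hk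
      rw [h0]
      exact ⟨le_refl _, fun h => absurd (h k) (not_le.2 hk)⟩
    · suffices h : 0 < (Matrix.of fun i j : Fin (d + 1) => ((x j).choose (r i) : ℚ)).det by
        exact ⟨le_of_lt h, fun _ => h⟩
      by_cases hx0 : x 0 = 0
      · -- corner expansion
        have hr0 : r 0 = 0 := by have := hdom 0; omega
        cases d with
        | zero =>
          rw [Matrix.det_fin_one]
          simp [hx0, hr0]
        | succ e =>
          rw [Matrix.det_succ_column_zero]
          rw [Finset.sum_eq_single 0]
          · simp only [Fin.val_zero, pow_zero, one_mul, Matrix.of_apply, hx0, hr0,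
              Nat.choose_self, Nat.cast_one, Fin.succAbove_zero]
            have hsub : ((Matrix.of fun i j : Fin (e + 2) => ((x j).choose (r i) : ℚ)).submatrix
                Fin.succ Fin.succ) =
                Matrix.of (fun i j : Fin (e + 1) => (((x ∘ Fin.succ) j).choose ((r ∘ Fin.succ) i) : ℚ)) := rfl
            rw [hsub]
            refine (ih (r ∘ Fin.succ) (x ∘ Fin.succ) (hr.comp Fin.strictMono_succ)
              (hx.comp Fin.strictMono_succ) ?_).2 (fun k => hdom k.succ)
            have hsum : (∑ k : Fin (e + 1), x k.succ) + x 0 = ∑ k : Fin (e + 1 + 1), x k := by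
              rw [show ∑ k : Fin (e + 1 + 1), x k = x 0 + ∑ k : Fin (e + 1), x k.succ from
                Fin.sum_univ_succ x]
              omega
            simp only [Function.comp_apply]
            omega
          · intro b _ hb
            have hb0 : 0 < r b := by
              have : (0 : Fin (e + 2)) < b := Fin.pos_iff_ne_zero.mpr hb
              have := hr this
              omega
            have : x 0 < r b := by omega
            simp only [Matrix.of_apply, Nat.choose_eq_zero_of_lt this, Nat.cast_zero,
              mul_zero, zero_mul]
          · intro h
            exact absurd (Finset.mem_univ _) h
      · -- Pascal expansion
        have hx1 : ∀ k, 1 ≤ x k := by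
          intro k
          have : x 0 ≤ x k := hx.monotone (Fin.zero_le k)
          omega
        set g : Fin (d + 1) → Bool → (Fin (d + 1) → ℚ) := fun i b =>
          if b then (fun j => if r i = 0 then 0 else (((x j - 1).choose (r i - 1) : ℕ) : ℚ))
          else fun j => (((x j - 1).choose (r i) : ℕ) : ℚ) with hg
        have hrow : (fun i j => (((x j).choose (r i) : ℕ) : ℚ)) = fun i => ∑ b : Bool, g i b := by
          funext i
          rw [Fintype.sum_bool]
          funext j
          by_cases h0 : r i = 0
          · simp [hg, h0]
          · obtain ⟨m, hm⟩ := Nat.exists_eq_succ_of_ne_zero (by have := hx1 j; omega : x j ≠ 0)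
            obtain ⟨t, ht⟩ := Nat.exists_eq_succ_of_ne_zero h0
            have e1 : (x j).choose (r i) = (x j - 1).choose (r i - 1) + (x j - 1).choose (r i) := by
              rw [hm, ht, Nat.succ_sub_one, Nat.succ_sub_one, Nat.choose_succ_succ]
            simp [hg, h0, e1, Pi.add_apply]
        have expand : (Matrix.of fun i j : Fin (d + 1) => ((x j).choose (r i) : ℚ)).det
            = ∑ p : Fin (d + 1) → Bool, (Matrix.of fun i j => g i (p i) j).det := by
          show Matrix.detRowAlternating _ = _
          have : (Matrix.of fun i j : Fin (d + 1) => ((x j).choose (r i) : ℚ))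
              = fun i => ∑ b : Bool, g i b := hrow
          rw [this]
          exact (Matrix.detRowAlternating :
            (Fin (d+1) → ℚ) [⋀^Fin (d+1)]→ₗ[ℚ] ℚ).toMultilinearMap.map_sum g
        have hmeas : (∑ k, (x k - 1)) + d ≤ n := by
          have h1 : ∑ k : Fin (d + 1), (x k - 1 + 1) = ∑ k : Fin (d + 1), x k :=
            Finset.sum_congr rfl fun k _ => by have := hx1 k; omega
          have h2 : (∑ k : Fin (d + 1), (x k - 1)) + (d + 1) = ∑ k : Fin (d + 1), x k := by
            rw [← h1, Finset.sum_add_distrib]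
            simp [Finset.card_univ]
          omega
        have hxm : StrictMono (fun k => x k - 1) := by
          intro a b hab
          have h1 := hx hab
          have h2 := hx1 a
          show x a - 1 < x b - 1
          omega
        have term_nonneg : ∀ p : Fin (d + 1) → Bool,
            0 ≤ (Matrix.of fun i j => g i (p i) j).det := by
          intro p
          by_cases hz : ∃ i, p i = true ∧ r i = 0
          · obtain ⟨i, hpi, hri⟩ := hz
            rw [Matrix.det_eq_zero_of_row_eq_zero i (fun j => by simp [hg, hpi, hri])]
          · push_neg at hz
            have hN : (Matrix.of fun i j => g i (p i) j)
                = Matrix.of (fun i j : Fin (d + 1) =>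
                    (((x j - 1).choose (r i - (if p i then 1 else 0)) : ℕ) : ℚ)) := by
              ext i j
              by_cases hpi : p i
              · have hri : r i ≠ 0 := hz i hpi
                simp [hg, hpi, hri]
              · simp [hg, hpi]
            rw [hN]
            set s : Fin (d + 1) → ℕ := fun i => r i - (if p i then 1 else 0) with hs
            by_cases hinj : Function.Injective s
            · have hmono : Monotone s := by
                intro a b hab
                rcases eq_or_lt_of_le hab with h | h
                · rw [h]
                · have hq := hr h
                  simp only [hs]
                  split_ifs with h1 h2 h3 <;> omega
              exact (ih s (fun k => x k - 1) (hmono.strictMono_of_injective hinj) hxm hmeas).1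
            · simp only [Function.Injective, not_forall] at hinj
              obtain ⟨a, b, hab, hne⟩ := hinj
              rw [Matrix.det_zero_of_row_eq hne
                (funext fun j => congrArg (fun t => (((x j - 1).choose t : ℕ) : ℚ)) hab)]
        have term_pos : 0 < (Matrix.of fun i j =>
            g i ((fun k => decide (x k = r k)) i) j).det := by
          have hN : (Matrix.of fun i j => g i ((fun k => decide (x k = r k)) i) j)
              = Matrix.of (fun i j : Fin (d + 1) =>
                  (((x j - 1).choose (if x i = r i then r i - 1 else r i) : ℕ) : ℚ)) := by
            ext i j
            by_cases hit : x i = r i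
            · have hri : r i ≠ 0 := by have := hx1 i; omega
              simp [hg, hit, hri]
            · simp [hg, hit]
          rw [hN]
          set s : Fin (d + 1) → ℕ := fun i => if x i = r i then r i - 1 else r i with hs
          have hdomk : ∀ k, s k ≤ x k - 1 := by
            intro k
            have h1 := hdom k
            have h2 := hx1 k
            simp only [hs]
            split_ifs with h1 <;> omega
          have key2 : ∀ a b : Fin (d + 1), a < b → s a ≠ s b := by
            intro a b h
            have hrr := hr h
            have hxx := hx h
            have hda := hdom a
            have hdb := hdom b
            have hxa := hx1 a
            simp only [hs]
            split_ifs with h1 h2 h3 <;> omega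
          have hinj : Function.Injective s := by
            intro a b hab2
            by_contra hne
            rcases Ne.lt_or_gt hne with h | h
            · exact key2 a b h hab2
            · exact key2 b a h hab2.symm
          have hmono : Monotone s := by
            intro a b hab
            rcases eq_or_lt_of_le hab with h | h
            · rw [h]
            · have h1 := hr h
              simp only [hs]
              split_ifs with h1 h2 h3 <;> omega
          exact (ih s (fun k => x k - 1) (hmono.strictMono_of_injective hinj) hxm hmeas).2
            (fun k => hdomk k)
        rw [expand]
        apply Finset.sum_pos'
        · intro p _
          exact term_nonneg p
        · exact ⟨(fun k => decide (x k = r k)), Finset.mem_univ _, term_pos⟩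


theorem stmt_3 {d : ℕ} (r x : Fin (d + 1) → ℕ)
    (hr : StrictMono r) (hx : StrictMono x) :
    IsUnit (Matrix.of fun i j : Fin (d + 1) => ((x j).choose (r i) : ℚ)) ↔
      ∀ k : Fin (d + 1), (x k).choose (r k) ≠ 0 := by
  rw [Matrix.isUnit_iff_isUnit_det, isUnit_iff_ne_zero]
  constructor
  · intro h k hc
    exact h (det_zero_of_bad r x hr.monotone hx.monotone k (Nat.choose_eq_zero_iff.mp hc))
  · intro h
    have hdom : ∀ k, r k ≤ x k := by
      intro k
      by_contra hk
      exact h k (Nat.choose_eq_zero_of_lt (by omega))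
    exact ne_of_gt ((key ((∑ k, x k) + d) r x hr hx (le_refl _)).2 hdom)
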